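/- Local (vertex-star) form of Theorem 1.9(1). Let (m, p_0, p) be a spherical vertex star with edge weights c_j and vertex weight d_0. Suppose q_0 ∈ ℝ³ and q : ZMod m → ℝ³ satisfy ⟨q_j − q_0, p_j − p_0⟩ = 0 for all j ∈ ZMod m and ⟨q_{j+1} − q_j, p_{j+1} − p_j⟩ = 0 for all j ∈ ZMod m (an infinitesimal isometric deformation of the Euclidean triangulated cone over the star). Define f_0 := ⟨q_0, p_0⟩ and f_j := ⟨q_j, p_j⟩ (the radial components). Then ∑_{j∈ZMod m} c_j·(f_j − f_0) = −2·d_0·f_0; i.e. the radial component of an infinitesimal isometric deformation of a polyhedron inscribed in the unit sphere is a (−2)-eigenfunction of the discrete spherical Laplacian at the central vertex. -/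

import Mathlib

noncomputable section

/-- Standard inner product on `ℝ³`. -/
def dot3 (x y : Fin 3 → ℝ) : ℝ := x 0 * y 0 + x 1 * y 1 + x 2 * y 2

/-- Euclidean norm on `ℝ³`. -/
def norm3 (x : Fin 3 → ℝ) : ℝ := Real.sqrt (dot3 x x)

/-- Cross product on `ℝ³`. -/
def cross3 (x y : Fin 3 → ℝ) : Fin 3 → ℝ :=
  ![x 1 * y 2 - x 2 * y 1, x 2 * y 0 - x 0 * y 2, x 0 * y 1 - x 1 * y 0]

/-- Determinant of three vectors in `ℝ³`. -/
def det3 (x y z : Fin 3 → ℝ) : ℝ := dot3 (cross3 x y) z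

/-- Spherical angle at `a` between `b` and `c` (all unit vectors). -/
def sphAngle (a b c : Fin 3 → ℝ) : ℝ :=
  Real.arccos (dot3 (b - dot3 a b • a) (c - dot3 a c • a) /
    (norm3 (b - dot3 a b • a) * norm3 (c - dot3 a c • a)))

/-- Edge weight `c_j` of the edge `(p₀, p_j)` of a spherical vertex star. -/
def sphStarWeight (m : ℕ) (p0 : Fin 3 → ℝ) (p : ZMod m → Fin 3 → ℝ) (j : ZMod m) : ℝ :=
  (Real.tan ((sphAngle p0 (p j) (p (j+1)) + sphAngle (p j) (p (j+1)) p0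
      - sphAngle (p (j+1)) p0 (p j)) / 2)
   + Real.tan ((sphAngle p0 (p (j-1)) (p j) + sphAngle (p j) p0 (p (j-1))
      - sphAngle (p (j-1)) (p j) p0) / 2))
  / (2 * Real.cos (Real.arccos (dot3 p0 (p j)) / 2) ^ 2)

/-- Vertex weight `d₀` of a spherical vertex star. -/
def sphStarVertexWeight (m : ℕ) [NeZero m] (p0 : Fin 3 → ℝ) (p : ZMod m → Fin 3 → ℝ) : ℝ :=
  ∑ j : ZMod m, sphStarWeight m p0 p j * Real.sin (Real.arccos (dot3 p0 (p j)) / 2) ^ 2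

/-- Local (vertex-star) form of Theorem 1.9(1): the radial component of an infinitesimal
isometric deformation of a polyhedron inscribed in the unit sphere is a `(−2)`-eigenfunction
of the discrete spherical Laplacian at the central vertex. -/



lemma cross3_0 (x y : Fin 3 → ℝ) : cross3 x y 0 = x 1 * y 2 - x 2 * y 1 := rfl
lemma cross3_1 (x y : Fin 3 → ℝ) : cross3 x y 1 = x 2 * y 0 - x 0 * y 2 := rfl
lemma cross3_2 (x y : Fin 3 → ℝ) : cross3 x y 2 = x 0 * y 1 - x 1 * y 0 := rfl

lemma det3_expand (x y z : Fin 3 → ℝ) : det3 x y z =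
    (x 1 * y 2 - x 2 * y 1) * z 0 + (x 2 * y 0 - x 0 * y 2) * z 1
      + (x 0 * y 1 - x 1 * y 0) * z 2 := by
  unfold det3 dot3; rw [cross3_0, cross3_1, cross3_2]

lemma dot3_comm (x y : Fin 3 → ℝ) : dot3 x y = dot3 y x := by unfold dot3; ring

lemma dot3_self_nonneg (x : Fin 3 → ℝ) : 0 ≤ dot3 x x := by unfold dot3; nlinarith [sq_nonneg (x 0), sq_nonneg (x 1), sq_nonneg (x 2)]

-- Cauchy-Binet / Gram identity
lemma det3_sq (a b c : Fin 3 → ℝ) :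
    det3 a b c ^ 2 = dot3 a a * dot3 b b * dot3 c c + 2 * dot3 a b * dot3 b c * dot3 a c
      - dot3 a a * dot3 b c ^ 2 - dot3 b b * dot3 a c ^ 2 - dot3 c c * dot3 a b ^ 2 := by
  rw [det3_expand]; unfold dot3; ring

lemma det3_cyc (a b c : Fin 3 → ℝ) : det3 b c a = det3 a b c := by
  rw [det3_expand, det3_expand]; ring

lemma det3_swap23 (a b c : Fin 3 → ℝ) : det3 a c b = -det3 a b c := by
  rw [det3_expand, det3_expand]; ring

lemma dot3_cross_right (u v w : Fin 3 → ℝ) : dot3 (cross3 u v) w = dot3 u (cross3 v w) := by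
  unfold dot3; rw [cross3_0, cross3_1, cross3_2, cross3_0, cross3_1, cross3_2]; ring

lemma dot3_cross_self (u v : Fin 3 → ℝ) : dot3 (cross3 u v) v = 0 := by
  unfold dot3; rw [cross3_0, cross3_1, cross3_2]; ring

lemma dot3_self_cross (u v : Fin 3 → ℝ) : dot3 u (cross3 u v) = 0 := by
  unfold dot3; rw [cross3_0, cross3_1, cross3_2]; ring

-- Binet–Cauchy for cross products
lemma dot3_cross_cross (u v x y : Fin 3 → ℝ) :
    dot3 (cross3 u v) (cross3 x y) = dot3 u x * dot3 v y - dot3 u y * dot3 v x := by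
  unfold dot3; rw [cross3_0, cross3_1, cross3_2, cross3_0, cross3_1, cross3_2]; ring

-- Lagrange
lemma cross3_self_dot (u v : Fin 3 → ℝ) :
    dot3 (cross3 u v) (cross3 u v) = dot3 u u * dot3 v v - dot3 u v ^ 2 := by
  rw [dot3_cross_cross, dot3_comm v u]; ring



lemma dot3_smul_left (r : ℝ) (x y : Fin 3 → ℝ) : dot3 (r • x) y = r * dot3 x y := by
  unfold dot3; simp [Pi.smul_apply, smul_eq_mul]; ring

lemma dot3_smul_right (r : ℝ) (x y : Fin 3 → ℝ) : dot3 x (r • y) = r * dot3 x y := by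
  unfold dot3; simp [Pi.smul_apply, smul_eq_mul]; ring

lemma dot3_sub_left (x y z : Fin 3 → ℝ) : dot3 (x - y) z = dot3 x z - dot3 y z := by
  unfold dot3; simp [Pi.sub_apply]; ring

lemma dot3_sub_right (x y z : Fin 3 → ℝ) : dot3 x (y - z) = dot3 x y - dot3 x z := by
  unfold dot3; simp [Pi.sub_apply]; ring

lemma dot3_add_left (x y z : Fin 3 → ℝ) : dot3 (x + y) z = dot3 x z + dot3 y z := by
  unfold dot3; simp [Pi.add_apply]; ring

lemma dot3_add_right (x y z : Fin 3 → ℝ) : dot3 x (y + z) = dot3 x y + dot3 x z := by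
  unfold dot3; simp [Pi.add_apply]; ring

lemma dot3_neg_left (x y : Fin 3 → ℝ) : dot3 (-x) y = -dot3 x y := by
  unfold dot3; simp [Pi.neg_apply]; ring

lemma cross3_anticomm (x y : Fin 3 → ℝ) : cross3 y x = -cross3 x y := by
  funext i; fin_cases i <;>
    simp [cross3, Pi.neg_apply, Matrix.cons_val_zero, Matrix.cons_val_one, Matrix.head_cons] <;> ring

lemma cross3_sub_right (W x y : Fin 3 → ℝ) : cross3 W (x - y) = cross3 W x - cross3 W y := by
  funext i; fin_cases i <;>
    simp [cross3, Pi.sub_apply, Matrix.cons_val_zero, Matrix.cons_val_one, Matrix.head_cons] <;> ring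

-- triple product expansion : w × (v × w) = (dot3 w w) • v - (dot3 v w) • w
lemma cross3_triple (v w : Fin 3 → ℝ) :
    cross3 w (cross3 v w) = dot3 w w • v - dot3 v w • w := by
  funext i; fin_cases i <;>
    simp [cross3, dot3, Pi.sub_apply, Pi.smul_apply, smul_eq_mul,
      Matrix.cons_val_zero, Matrix.cons_val_one, Matrix.head_cons] <;> ring

lemma cramer0 (a b c v : Fin 3 → ℝ) : v 0 * det3 a b c =
    dot3 v a * (b 1 * c 2 - b 2 * c 1) + dot3 v b * (a 2 * c 1 - a 1 * c 2)
      + dot3 v c * (a 1 * b 2 - a 2 * b 1) := by rw [det3_expand]; unfold dot3; ring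

lemma cramer1 (a b c v : Fin 3 → ℝ) : v 1 * det3 a b c =
    dot3 v a * (b 2 * c 0 - b 0 * c 2) + dot3 v b * (a 0 * c 2 - a 2 * c 0)
      + dot3 v c * (a 2 * b 0 - a 0 * b 2) := by rw [det3_expand]; unfold dot3; ring

lemma cramer2 (a b c v : Fin 3 → ℝ) : v 2 * det3 a b c =
    dot3 v a * (b 0 * c 1 - b 1 * c 0) + dot3 v b * (a 1 * c 0 - a 0 * c 1)
      + dot3 v c * (a 0 * b 1 - a 1 * b 0) := by rw [det3_expand]; unfold dot3; ring

lemma eq3_of_dot3 (a b c v : Fin 3 → ℝ) (hd : det3 a b c ≠ 0)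
    (h1 : dot3 v a = 0) (h2 : dot3 v b = 0) (h3 : dot3 v c = 0) : v = 0 := by
  funext i
  have h0 := cramer0 a b c v
  have h1' := cramer1 a b c v
  have h2' := cramer2 a b c v
  rw [h1, h2, h3] at h0 h1' h2'
  simp only [zero_mul, add_zero, zero_add] at h0 h1' h2'
  fin_cases i
  · simpa using (mul_eq_zero.1 h0).resolve_right hd
  · simpa using (mul_eq_zero.1 h1').resolve_right hd
  · simpa using (mul_eq_zero.1 h2').resolve_right hd

lemma eq3_of_dot3_eq (a b c X Y : Fin 3 → ℝ) (hd : det3 a b c ≠ 0)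
    (h1 : dot3 X a = dot3 Y a) (h2 : dot3 X b = dot3 Y b) (h3 : dot3 X c = dot3 Y c) : X = Y := by
  have := eq3_of_dot3 a b c (X - Y) hd (by rw [dot3_sub_left]; linarith)
    (by rw [dot3_sub_left]; linarith) (by rw [dot3_sub_left]; linarith)
  have := sub_eq_zero.1 this; exact this

lemma parallel_of_cross3_eq_zero (v w : Fin 3 → ℝ) (hw : dot3 w w ≠ 0)
    (h : cross3 v w = 0) : v = (dot3 v w / dot3 w w) • w := by
  have key := cross3_triple v w
  rw [h] at key
  have h0 : cross3 w (0 : Fin 3 → ℝ) = 0 := by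
    funext i; fin_cases i <;> simp [cross3, Matrix.cons_val_zero, Matrix.cons_val_one, Matrix.head_cons]
  rw [h0] at key
  funext i
  have := congrFun key i
  simp only [Pi.sub_apply, Pi.smul_apply, Pi.zero_apply, smul_eq_mul] at this ⊢
  field_simp
  linarith [this]

lemma triangle_rigid (a b c u v w : Fin 3 → ℝ) (hd : det3 a b c ≠ 0)
    (h1 : dot3 (v - u) (b - a) = 0) (h2 : dot3 (w - v) (c - b) = 0)
    (h3 : dot3 (w - u) (c - a) = 0) :
    ∃ W t, u = cross3 W a + t ∧ v = cross3 W b + t ∧ w = cross3 W c + t := by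
  set e1 := b - a with he1
  set e2 := c - a with he2
  set δ1 := v - u with hδ1
  set δ2 := w - u with hδ2
  set n := cross3 e1 e2 with hn
  have hna : dot3 n a = det3 a b c := by
    show dot3 (cross3 (b-a) (c-a)) a = det3 a b c
    show det3 (b-a) (c-a) a = det3 a b c
    rw [det3_expand, det3_expand]; simp only [Pi.sub_apply]; ring
  have hnn : dot3 n n ≠ 0 := by
    intro h0
    apply hd
    have hh : n 0 ^ 2 + n 1 ^ 2 + n 2 ^ 2 = 0 := by unfold dot3 at h0; nlinarith [h0]
    have e00 : n 0 = 0 := by nlinarith [sq_nonneg (n 0), sq_nonneg (n 1), sq_nonneg (n 2)]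
    have e01 : n 1 = 0 := by nlinarith [sq_nonneg (n 0), sq_nonneg (n 1), sq_nonneg (n 2)]
    have e02 : n 2 = 0 := by nlinarith [sq_nonneg (n 0), sq_nonneg (n 1), sq_nonneg (n 2)]
    rw [← hna]; unfold dot3; rw [e00, e01, e02]; ring
  have he1n : dot3 e1 n = 0 := dot3_self_cross e1 e2
  have he2n : dot3 e2 n = 0 := by rw [dot3_comm]; exact dot3_cross_self e1 e2
  have hmix : dot3 δ1 e2 + dot3 δ2 e1 = 0 := by
    have expand : dot3 (w - v) (c - b) = dot3 δ2 e2 - dot3 δ2 e1 - dot3 δ1 e2 + dot3 δ1 e1 := by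
      rw [hδ1, hδ2, he1, he2]; unfold dot3; simp only [Pi.sub_apply]; ring
    rw [expand] at h2
    linarith [h1, h3, h2]
  set W := (dot3 n n)⁻¹ • (dot3 δ2 n • e1 - dot3 δ1 n • e2 + dot3 δ1 e2 • n) with hW
  have hWdot : ∀ x : Fin 3 → ℝ, dot3 W x =
      (dot3 n n)⁻¹ * (dot3 δ2 n * dot3 e1 x - dot3 δ1 n * dot3 e2 x + dot3 δ1 e2 * dot3 n x) := by
    intro x
    rw [hW, dot3_smul_left, dot3_add_left, dot3_sub_left, dot3_smul_left, dot3_smul_left,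
      dot3_smul_left]
  have hWn : dot3 W n = dot3 δ1 e2 := by
    rw [hWdot, he1n, he2n]; field_simp; ring
  have hdn : det3 e1 e2 n ≠ 0 := hnn
  have hc1 : cross3 W e1 = δ1 := by
    refine eq3_of_dot3_eq e1 e2 n _ _ hdn ?_ ?_ ?_
    · rw [dot3_cross_self]; exact h1.symm
    · rw [dot3_cross_right]; rw [← hn, hWn]
    · rw [dot3_cross_right, hWdot]
      have t1 : dot3 e1 (cross3 e1 n) = 0 := dot3_self_cross e1 n
      have t2 : dot3 n (cross3 e1 n) = 0 := by rw [dot3_comm]; exact dot3_cross_self e1 n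
      have t3 : dot3 e2 (cross3 e1 n) = - dot3 n n := by
        rw [← dot3_cross_right, cross3_anticomm e1 e2, dot3_neg_left, ← hn]
      rw [t1, t2, t3]; field_simp; ring
  have hc2 : cross3 W e2 = δ2 := by
    refine eq3_of_dot3_eq e1 e2 n _ _ hdn ?_ ?_ ?_
    · rw [dot3_cross_right]
      have : cross3 e2 e1 = -n := by rw [hn]; exact cross3_anticomm e1 e2
      rw [this, dot3_comm W (-n), dot3_neg_left, dot3_comm n W, hWn]
      linarith [hmix]
    · rw [dot3_cross_self]; exact h3.symm
    · rw [dot3_cross_right, hWdot]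
      have t1 : dot3 e1 (cross3 e2 n) = dot3 n n := by
        rw [← dot3_cross_right, ← hn]
      have t2 : dot3 e2 (cross3 e2 n) = 0 := dot3_self_cross e2 n
      have t3 : dot3 n (cross3 e2 n) = 0 := by rw [dot3_comm]; exact dot3_cross_self e2 n
      rw [t1, t2, t3]; field_simp; ring
  refine ⟨W, u - cross3 W a, by abel, ?_, ?_⟩
  · have : cross3 W e1 = cross3 W b - cross3 W a := cross3_sub_right W b a
    rw [hc1] at this
    calc v = (v - u) + u := by abel
    _ = (cross3 W b - cross3 W a) + u := by rw [← this, hδ1]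
    _ = cross3 W b + (u - cross3 W a) := by abel
  · have : cross3 W e2 = cross3 W c - cross3 W a := cross3_sub_right W c a
    rw [hc2] at this
    calc w = (w - u) + u := by abel
    _ = (cross3 W c - cross3 W a) + u := by rw [← this, hδ2]
    _ = cross3 W c + (u - cross3 W a) := by abel



lemma sphAngle_comm (a b c : Fin 3 → ℝ) : sphAngle a b c = sphAngle a c b := by
  unfold sphAngle
  rw [dot3_comm (b - dot3 a b • a) (c - dot3 a c • a), mul_comm]

lemma sphAngle_cos_sin (a b c : Fin 3 → ℝ) (ha : dot3 a a = 1) (hb : dot3 b b = 1)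
    (hc : dot3 c c = 1) (hz2 : 0 < 1 - dot3 a b ^ 2) (hy2 : 0 < 1 - dot3 a c ^ 2)
    (hgram : (1 - dot3 a b ^ 2) * (1 - dot3 a c ^ 2)
      = det3 a b c ^ 2 + (dot3 b c - dot3 a b * dot3 a c) ^ 2) :
    Real.cos (sphAngle a b c) = (dot3 b c - dot3 a b * dot3 a c) /
        (Real.sqrt (1 - dot3 a b ^ 2) * Real.sqrt (1 - dot3 a c ^ 2))
    ∧ Real.sin (sphAngle a b c) = |det3 a b c| /
        (Real.sqrt (1 - dot3 a b ^ 2) * Real.sqrt (1 - dot3 a c ^ 2)) := by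
  set x := dot3 b c with hx
  set z := dot3 a b with hzz
  set y := dot3 a c with hyy
  set R := Real.sqrt (1 - z ^ 2) with hR
  set Q := Real.sqrt (1 - y ^ 2) with hQ
  have hRpos : 0 < R := Real.sqrt_pos.2 hz2
  have hQpos : 0 < Q := Real.sqrt_pos.2 hy2
  have hR2 : R ^ 2 = 1 - z ^ 2 := Real.sq_sqrt hz2.le
  have hQ2 : Q ^ 2 = 1 - y ^ 2 := Real.sq_sqrt hy2.le
  have hnum : dot3 (b - dot3 a b • a) (c - dot3 a c • a) = x - z * y := by
    rw [dot3_sub_left, dot3_sub_right, dot3_sub_right, dot3_smul_left, dot3_smul_left,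
      dot3_smul_right, dot3_smul_right, ha, dot3_comm b a]
    rw [hx, hzz, hyy]; ring
  have hnb : norm3 (b - dot3 a b • a) = R := by
    rw [norm3, hR]
    congr 1
    rw [dot3_sub_left, dot3_sub_right, dot3_sub_right, dot3_smul_left, dot3_smul_left,
      dot3_smul_right, dot3_smul_right, ha, hb, dot3_comm b a]
    rw [hzz]; ring
  have hnc : norm3 (c - dot3 a c • a) = Q := by
    rw [norm3, hQ]
    congr 1
    rw [dot3_sub_left, dot3_sub_right, dot3_sub_right, dot3_smul_left, dot3_smul_left,
      dot3_smul_right, dot3_smul_right, ha, hc, dot3_comm c a]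
    ring
  have hangle : sphAngle a b c = Real.arccos ((x - z * y) / (R * Q)) := by
    rw [sphAngle, hnum, hnb, hnc]
  have hbound : (x - z * y) ^ 2 ≤ (R * Q) ^ 2 := by
    have : (R * Q) ^ 2 = (1 - z ^ 2) * (1 - y ^ 2) := by rw [mul_pow, hR2, hQ2]
    rw [this, hgram]; nlinarith [sq_nonneg (det3 a b c)]
  have hRQpos : 0 < R * Q := mul_pos hRpos hQpos
  have harg1 : -1 ≤ (x - z * y) / (R * Q) := by
    rw [le_div_iff₀ hRQpos]; nlinarith [hbound, hRQpos]
  have harg2 : (x - z * y) / (R * Q) ≤ 1 := by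
    rw [div_le_one hRQpos]; nlinarith [hbound, hRQpos]
  constructor
  · rw [hangle, Real.cos_arccos harg1 harg2]
  · rw [hangle, Real.sin_arccos]
    have h1 : 1 - ((x - z * y) / (R * Q)) ^ 2 = det3 a b c ^ 2 / (R * Q) ^ 2 := by
      rw [div_pow]
      rw [eq_div_iff (by positivity : (R*Q)^2 ≠ 0), sub_mul,
        div_mul_cancel₀ _ (by positivity : (R*Q)^2 ≠ 0)]
      rw [mul_pow, hR2, hQ2]
      linarith [hgram]
    rw [h1, Real.sqrt_div (sq_nonneg _), Real.sqrt_sq_eq_abs, Real.sqrt_sq hRQpos.le]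

open Real

set_option maxHeartbeats 1000000 in
lemma tan_half_formula (A B C x y z P Q R da : ℝ)
    (hP : 0 < P) (hQ : 0 < Q) (hR : 0 < R) (hda : 0 < da)
    (hP2 : P ^ 2 = 1 - x ^ 2) (hQ2 : Q ^ 2 = 1 - y ^ 2) (hR2 : R ^ 2 = 1 - z ^ 2)
    (hg : da ^ 2 = 1 + 2 * (x * y * z) - x ^ 2 - y ^ 2 - z ^ 2)
    (hcosA : Real.cos A = (x - z * y) / (R * Q)) (hsinA : Real.sin A = da / (R * Q))
    (hcosB : Real.cos B = (y - x * z) / (P * R)) (hsinB : Real.sin B = da / (P * R))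
    (hcosC : Real.cos C = (z - y * x) / (Q * P)) (hsinC : Real.sin C = da / (Q * P))
    (hA1 : 0 ≤ A) (hA2 : A ≤ π) (hB1 : 0 ≤ B) (hB2 : B ≤ π) (hC1 : 0 ≤ C) (hC2 : C ≤ π) :
    Real.tan ((A + B - C) / 2) = (1 + z - x - y) / da := by
  have hy1 : 0 < 1 + y := by nlinarith [sq_nonneg Q]
  -- strict angle bounds
  have hsinApos : 0 < Real.sin A := by rw [hsinA]; positivity
  have hsinBpos : 0 < Real.sin B := by rw [hsinB]; positivity
  have hsinCpos : 0 < Real.sin C := by rw [hsinC]; positivity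
  have hA0 : 0 < A := by
    rcases eq_or_lt_of_le hA1 with h | h
    · exfalso; rw [← h, Real.sin_zero] at hsinApos; linarith
    · exact h
  have hApi : A < π := by
    rcases eq_or_lt_of_le hA2 with h | h
    · exfalso; rw [h, Real.sin_pi] at hsinApos; linarith
    · exact h
  have hB0 : 0 < B := by
    rcases eq_or_lt_of_le hB1 with h | h
    · exfalso; rw [← h, Real.sin_zero] at hsinBpos; linarith
    · exact h
  have hBpi : B < π := by
    rcases eq_or_lt_of_le hB2 with h | h
    · exfalso; rw [h, Real.sin_pi] at hsinBpos; linarith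
    · exact h
  have hC0 : 0 < C := by
    rcases eq_or_lt_of_le hC1 with h | h
    · exfalso; rw [← h, Real.sin_zero] at hsinCpos; linarith
    · exact h
  have hCpi : C < π := by
    rcases eq_or_lt_of_le hC2 with h | h
    · exfalso; rw [h, Real.sin_pi] at hsinCpos; linarith
    · exact h
  -- multiplied forms
  have hRQ : R * Q ≠ 0 := by positivity
  have hPR : P * R ≠ 0 := by positivity
  have hQP : Q * P ≠ 0 := by positivity
  have hcosA' : Real.cos A * (R * Q) = x - z * y := by rw [hcosA]; field_simp
  have hsinA' : Real.sin A * (R * Q) = da := by rw [hsinA]; field_simp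
  have hcosB' : Real.cos B * (P * R) = y - x * z := by rw [hcosB]; field_simp
  have hsinB' : Real.sin B * (P * R) = da := by rw [hsinB]; field_simp
  have hcosC' : Real.cos C * (Q * P) = z - y * x := by rw [hcosC]; field_simp
  have hsinC' : Real.sin C * (Q * P) = da := by rw [hsinC]; field_simp
  -- key positivity for the angle inequality A + B - C < π
  have hden : (0:ℝ) < P * (Q * Q) * R := by positivity
  have e : (Real.cos (A - C) + Real.cos B) * (P * (Q * Q) * R) = (1 + y) * da ^ 2 := by
    rw [Real.cos_sub]
    linear_combination (Real.cos C * (Q * P)) * hcosA' + (x - z * y) * hcosC'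
      + (Real.sin C * (Q * P)) * hsinA' + da * hsinC' + (Q * Q) * hcosB'
      + (y - x * z) * hQ2 - y * hg
  have hkey : 0 < Real.cos (A - C) + Real.cos B := by
    have hX : Real.cos (A - C) + Real.cos B = ((1 + y) * da ^ 2) / (P * (Q * Q) * R) := by
      rw [eq_div_iff (ne_of_gt hden)]; exact e
    rw [hX]
    positivity
  have hθhi : A + B - C < π := by
    rcases le_or_gt A C with h | h
    · linarith
    · by_contra h'
      push_neg at h'
      have hcc := Real.cos_le_cos_of_nonneg_of_le_pi (by linarith : (0:ℝ) ≤ π - B)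
        (by linarith : A - C ≤ π) (by linarith : π - B ≤ A - C)
      rw [Real.cos_pi_sub] at hcc
      linarith
  have hθlo : -π < A + B - C := by linarith
  -- half-angle positivity
  have hcoshalf : 0 < Real.cos ((A + B - C) / 2) := by
    apply Real.cos_pos_of_mem_Ioo
    constructor <;> [linarith; linarith]
  -- sin θ closed form
  have hsθ : Real.sin (A + B - C) * (P * Q * R) ^ 2
      = da * ((1 + x) * (1 + y) * (1 - z) * (1 + z - x - y)) := by
    rw [Real.sin_sub, Real.sin_add, Real.cos_add]
    linear_combination
      (Real.cos B * (P * R)) * (Real.cos C * (Q * P)) * hsinA'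
        + da * (Real.cos C * (Q * P)) * hcosB' + da * (y - x * z) * hcosC'
      + (Real.sin B * (P * R)) * (Real.cos C * (Q * P)) * hcosA'
        + (x - z * y) * (Real.cos C * (Q * P)) * hsinB' + (x - z * y) * da * hcosC'
      - ((Real.cos B * (P * R)) * (Real.sin C * (Q * P)) * hcosA'
        + (x - z * y) * (Real.sin C * (Q * P)) * hcosB' + (x - z * y) * (y - x * z) * hsinC')
      + (Real.sin B * (P * R)) * (Real.sin C * (Q * P)) * hsinA'
        + da * (Real.sin C * (Q * P)) * hsinB' + (da * da) * hsinC'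
      + da * hg
  -- 1 + cos θ closed form
  have hcθ : (1 + Real.cos (A + B - C)) * (P * Q * R) ^ 2
      = (1 + x) * (1 + y) * (1 - z) * da ^ 2 := by
    rw [Real.cos_sub, Real.cos_add, Real.sin_add]
    linear_combination
      ((Q * R) ^ 2) * hP2 + ((1 - x ^ 2) * R ^ 2) * hQ2 + ((1 - x ^ 2) * (1 - y ^ 2)) * hR2
      + (Real.cos B * (P * R)) * (Real.cos C * (Q * P)) * hcosA'
        + (x - z * y) * (Real.cos C * (Q * P)) * hcosB' + (x - z * y) * (y - x * z) * hcosC'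
      - ((Real.sin B * (P * R)) * (Real.cos C * (Q * P)) * hsinA'
        + da * (Real.cos C * (Q * P)) * hsinB' + da * da * hcosC')
      + (Real.cos B * (P * R)) * (Real.sin C * (Q * P)) * hsinA'
        + da * (Real.sin C * (Q * P)) * hcosB' + da * (y - x * z) * hsinC'
      + (Real.sin B * (P * R)) * (Real.sin C * (Q * P)) * hcosA'
        + (x - z * y) * (Real.sin C * (Q * P)) * hsinB' + (x - z * y) * da * hsinC'
      - ((1 + x) * (1 + y) * (1 - z)) * hg + (x*y - x*z - y*z + x + y - z) * hg
  -- half-angle relations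
  have hs2 : Real.sin (A + B - C) = 2 * Real.sin ((A + B - C)/2) * Real.cos ((A + B - C)/2) := by
    have := Real.sin_two_mul ((A + B - C)/2)
    rw [show 2 * ((A + B - C)/2) = A + B - C by ring] at this
    exact this
  have hc2 : Real.cos (A + B - C) = 2 * Real.cos ((A + B - C)/2) ^ 2 - 1 := by
    have := Real.cos_two_mul ((A + B - C)/2)
    rw [show 2 * ((A + B - C)/2) = A + B - C by ring] at this
    exact this
  rw [hs2] at hsθ
  rw [hc2] at hcθ
  -- conclude
  have hPQR : (0:ℝ) < (P * Q * R) ^ 2 := by positivity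
  have key : (2 * Real.cos ((A + B - C)/2) * (P * Q * R) ^ 2)
      * (Real.sin ((A + B - C)/2) * da - (1 + z - x - y) * Real.cos ((A + B - C)/2)) = 0 := by
    linear_combination da * hsθ - (1 + z - x - y) * hcθ
  have hfac : Real.sin ((A + B - C)/2) * da - (1 + z - x - y) * Real.cos ((A + B - C)/2) = 0 := by
    have hfacpos : 0 < 2 * Real.cos ((A + B - C)/2) * (P * Q * R) ^ 2 := by positivity
    rcases mul_eq_zero.1 key with h | h
    · exact absurd h (ne_of_gt hfacpos)
    · exact h
  rw [Real.tan_eq_sin_div_cos, div_eq_div_iff (ne_of_gt hcoshalf) (ne_of_gt hda)]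
  linarith [hfac]


lemma one_sub_sq_pos (a b c : Fin 3 → ℝ) (ha : dot3 a a = 1) (hb : dot3 b b = 1)
    (hc : dot3 c c = 1) (hd : det3 a b c ≠ 0) : 0 < 1 - dot3 a b ^ 2 := by
  have hg0 := det3_sq a b c
  rw [ha, hb, hc] at hg0
  have hd2 : 0 < det3 a b c ^ 2 := pow_two_pos_of_ne_zero hd
  have hznn : 0 ≤ 1 - dot3 a b ^ 2 := by
    have h := dot3_self_nonneg (cross3 a b); rw [cross3_self_dot, ha, hb] at h; linarith
  have hynn : 0 ≤ 1 - dot3 a c ^ 2 := by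
    have h := dot3_self_nonneg (cross3 a c); rw [cross3_self_dot, ha, hc] at h; linarith
  have prod1 : (1 - dot3 a b ^ 2) * (1 - dot3 a c ^ 2)
      = det3 a b c ^ 2 + (dot3 b c - dot3 a b * dot3 a c) ^ 2 := by linear_combination -hg0
  nlinarith [prod1, hd2, sq_nonneg (dot3 b c - dot3 a b * dot3 a c), hynn, hznn]


lemma tan_formula (a b c : Fin 3 → ℝ) (ha : dot3 a a = 1) (hb : dot3 b b = 1)
    (hc : dot3 c c = 1) (hd : det3 a b c ≠ 0) :
    Real.tan ((sphAngle a b c + sphAngle b c a - sphAngle c a b) / 2)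
      = (1 + dot3 a b - dot3 b c - dot3 a c) / |det3 a b c| := by
  have hg0 := det3_sq a b c
  rw [ha, hb, hc] at hg0
  have hd2 : 0 < det3 a b c ^ 2 := pow_two_pos_of_ne_zero hd
  have hxnn : 0 ≤ 1 - dot3 b c ^ 2 := by
    have h := dot3_self_nonneg (cross3 b c); rw [cross3_self_dot, hb, hc] at h; linarith
  have hynn : 0 ≤ 1 - dot3 a c ^ 2 := by
    have h := dot3_self_nonneg (cross3 a c); rw [cross3_self_dot, ha, hc] at h; linarith
  have hznn : 0 ≤ 1 - dot3 a b ^ 2 := by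
    have h := dot3_self_nonneg (cross3 a b); rw [cross3_self_dot, ha, hb] at h; linarith
  have prod1 : (1 - dot3 a b ^ 2) * (1 - dot3 a c ^ 2)
      = det3 a b c ^ 2 + (dot3 b c - dot3 a b * dot3 a c) ^ 2 := by linear_combination -hg0
  have prod2 : (1 - dot3 b c ^ 2) * (1 - dot3 a b ^ 2)
      = det3 a b c ^ 2 + (dot3 a c - dot3 b c * dot3 a b) ^ 2 := by linear_combination -hg0
  have prod3 : (1 - dot3 a c ^ 2) * (1 - dot3 b c ^ 2)
      = det3 a b c ^ 2 + (dot3 a b - dot3 a c * dot3 b c) ^ 2 := by linear_combination -hg0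
  have hz2 : 0 < 1 - dot3 a b ^ 2 := by
    nlinarith [prod1, hd2, sq_nonneg (dot3 b c - dot3 a b * dot3 a c), hynn, hznn]
  have hy2 : 0 < 1 - dot3 a c ^ 2 := by
    nlinarith [prod1, hd2, sq_nonneg (dot3 b c - dot3 a b * dot3 a c), hynn, hznn]
  have hx2 : 0 < 1 - dot3 b c ^ 2 := by
    nlinarith [prod2, hd2, sq_nonneg (dot3 a c - dot3 b c * dot3 a b), hxnn, hznn]
  have hA := sphAngle_cos_sin a b c ha hb hc hz2 hy2 prod1
  have hB := sphAngle_cos_sin b c a hb hc ha hx2 (by rw [dot3_comm b a]; exact hz2)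
    (by rw [dot3_comm b a, dot3_comm c a, det3_cyc]; linear_combination -hg0)
  have hC := sphAngle_cos_sin c a b hc ha hb (by rw [dot3_comm c a]; exact hy2)
    (by rw [dot3_comm c b]; exact hx2)
    (by rw [dot3_comm c a, dot3_comm c b, ← det3_cyc c a b]; linear_combination -hg0)
  rw [dot3_comm b a, dot3_comm c a, det3_cyc] at hB
  rw [dot3_comm c a, dot3_comm c b, ← det3_cyc c a b] at hC
  exact tan_half_formula (sphAngle a b c) (sphAngle b c a) (sphAngle c a b)
    (dot3 b c) (dot3 a c) (dot3 a b)
    (Real.sqrt (1 - dot3 b c ^ 2)) (Real.sqrt (1 - dot3 a c ^ 2))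
    (Real.sqrt (1 - dot3 a b ^ 2)) |det3 a b c|
    (Real.sqrt_pos.2 hx2) (Real.sqrt_pos.2 hy2) (Real.sqrt_pos.2 hz2) (abs_pos.2 hd)
    (Real.sq_sqrt hx2.le) (Real.sq_sqrt hy2.le) (Real.sq_sqrt hz2.le)
    (by rw [sq_abs]; linear_combination hg0)
    hA.1 hA.2 hB.1 hB.2 hC.1 hC.2
    (Real.arccos_nonneg _) (Real.arccos_le_pi _) (Real.arccos_nonneg _) (Real.arccos_le_pi _)
    (Real.arccos_nonneg _) (Real.arccos_le_pi _)


lemma dot3_cross_det (x y z : Fin 3 → ℝ) : dot3 (cross3 x y) z = det3 x y z := rfl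

lemma cross3_sub_left (x y z : Fin 3 → ℝ) : cross3 (x - y) z = cross3 x z - cross3 y z := by
  funext i; fin_cases i <;>
    simp [cross3, Pi.sub_apply, Matrix.cons_val_zero, Matrix.cons_val_one, Matrix.head_cons] <;> ring

lemma cross3_smul_left (r : ℝ) (x y : Fin 3 → ℝ) : cross3 (r • x) y = r • cross3 x y := by
  funext i; fin_cases i <;>
    simp [cross3, Pi.smul_apply, smul_eq_mul,
      Matrix.cons_val_zero, Matrix.cons_val_one, Matrix.head_cons] <;> ring

/-- The key weight identity for one spherical triangle. -/
lemma key_vec (a b c : Fin 3 → ℝ) (ha : dot3 a a = 1) (hb : dot3 b b = 1)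
    (hc : dot3 c c = 1) (hd : det3 a b c ≠ 0) :
    ((1 + dot3 a b - dot3 b c - dot3 a c) * (1 + dot3 a c)) • (b - dot3 a b • a)
      + ((1 + dot3 a c - dot3 b c - dot3 a b) * (1 + dot3 a b)) • (c - dot3 a c • a)
    = (det3 a b c * (1 + dot3 a c)) • cross3 a b
      - (det3 a b c * (1 + dot3 a b)) • cross3 a c := by
  have hg0 := det3_sq a b c
  rw [ha, hb, hc] at hg0
  apply eq3_of_dot3_eq a b c _ _ hd <;>
    simp only [dot3_add_left, dot3_sub_left, dot3_smul_left, dot3_sub_right, dot3_smul_right]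
  · rw [dot3_comm b a, dot3_comm c a, ha,
      dot3_comm (cross3 a b) a, dot3_self_cross, dot3_comm (cross3 a c) a, dot3_self_cross]
    ring
  · rw [dot3_comm c b, dot3_cross_self, dot3_cross_det, det3_swap23 a b c, hb]
    linear_combination (-(1 + dot3 a b)) * hg0
  · rw [dot3_cross_self, dot3_cross_det, hc]
    linear_combination (-(1 + dot3 a c)) * hg0

lemma key_scalar (a b c t : Fin 3 → ℝ) (ha : dot3 a a = 1) (hb : dot3 b b = 1)
    (hc : dot3 c c = 1) (hd : det3 a b c ≠ 0)
    (h1z : 1 + dot3 a b ≠ 0) (h1y : 1 + dot3 a c ≠ 0) :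
    (1 + dot3 a b - dot3 b c - dot3 a c) / det3 a b c / (1 + dot3 a b)
        * (dot3 t b - dot3 a b * dot3 t a)
      + (1 + dot3 a c - dot3 b c - dot3 a b) / det3 a b c / (1 + dot3 a c)
        * (dot3 t c - dot3 a c * dot3 t a)
    = dot3 t (cross3 a b) / (1 + dot3 a b) - dot3 t (cross3 a c) / (1 + dot3 a c) := by
  have hv := key_vec a b c ha hb hc hd
  have E := congrArg (dot3 t) hv
  rw [dot3_add_right, dot3_sub_right, dot3_smul_right, dot3_smul_right, dot3_smul_right,
    dot3_smul_right, dot3_sub_right, dot3_sub_right, dot3_smul_right, dot3_smul_right] at E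
  rw [div_div, div_div, div_mul_eq_mul_div, div_mul_eq_mul_div,
    div_add_div _ _ (mul_ne_zero hd h1z) (mul_ne_zero hd h1y), div_sub_div _ _ h1z h1y,
    div_eq_div_iff (mul_ne_zero (mul_ne_zero hd h1z) (mul_ne_zero hd h1y)) (mul_ne_zero h1z h1y)]
  linear_combination (det3 a b c * (1 + dot3 a b) * (1 + dot3 a c)) * E

/-- Consistency of the rotation decomposition across a shared edge. -/
lemma slide (a r W W' t t' : Fin 3 → ℝ) (haa : dot3 a a = 1) (hrr : dot3 r r = 1)
    (hz1 : dot3 a r ≠ 1)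
    (h1 : cross3 W a + t = cross3 W' a + t') (h2 : cross3 W r + t = cross3 W' r + t') :
    dot3 (t - t') (cross3 a r) = (1 + dot3 a r) * (dot3 W' a - dot3 W a) := by
  have hδa : t - t' = cross3 (W' - W) a := by
    rw [cross3_sub_left]; linear_combination h1
  have hδr : t - t' = cross3 (W' - W) r := by
    rw [cross3_sub_left]; linear_combination h2
  have hpar : cross3 (W' - W) (a - r) = 0 := by
    have e : cross3 (W' - W) (a - r) = cross3 (W' - W) a - cross3 (W' - W) r := by
      funext i; fin_cases i <;>
        simp [cross3, Pi.sub_apply, Matrix.cons_val_zero, Matrix.cons_val_one,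
          Matrix.head_cons] <;> ring
    rw [e, ← hδa, ← hδr, sub_self]
  have hss : dot3 (a - r) (a - r) = 2 - 2 * dot3 a r := by
    rw [dot3_sub_left, dot3_sub_right, dot3_sub_right, haa, hrr, dot3_comm r a]; ring
  have hss0 : dot3 (a - r) (a - r) ≠ 0 := by
    rw [hss]; intro h; apply hz1; linarith
  have hκ := parallel_of_cross3_eq_zero (W' - W) (a - r) hss0 hpar
  set κ := dot3 (W' - W) (a - r) / dot3 (a - r) (a - r) with hκdef
  have lhs_eq : dot3 (t - t') (cross3 a r)
      = κ * (dot3 (a - r) a * dot3 a r - dot3 (a - r) r * dot3 a a) := by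
    rw [hδa, hκ, cross3_smul_left, dot3_smul_left, dot3_cross_cross]
  have rhs_eq : dot3 W' a - dot3 W a = κ * dot3 (a - r) a := by
    have : dot3 (W' - W) a = κ * dot3 (a - r) a := by rw [hκ, dot3_smul_left]
    rw [dot3_sub_left] at this; linarith
  rw [lhs_eq, rhs_eq, dot3_sub_left, dot3_sub_left, haa, hrr, dot3_comm r a]
  ring



lemma zsum_succ {m : ℕ} [NeZero m] (f : ZMod m → ℝ) : ∑ j : ZMod m, f (j + 1) = ∑ j, f j :=
  Fintype.sum_bijective (fun j => j + 1) (Equiv.addRight (1 : ZMod m)).bijective _ _ fun _ => rfl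

lemma zsum_pred {m : ℕ} [NeZero m] (f : ZMod m → ℝ) : ∑ j : ZMod m, f (j - 1) = ∑ j, f j :=
  Fintype.sum_bijective (fun j => j - 1) (Equiv.subRight (1 : ZMod m)).bijective _ _ fun _ => rfl

theorem sph_inf_iso_radial_eigen
    (m : ℕ) (hm : 3 ≤ m) [NeZero m]
    (p0 : Fin 3 → ℝ) (p : ZMod m → Fin 3 → ℝ)
    (hp0 : norm3 p0 = 1) (hp : ∀ j, norm3 (p j) = 1)
    (hdet : ∀ j : ZMod m, 0 < det3 p0 (p j) (p (j+1)))
    (q0 : Fin 3 → ℝ) (q : ZMod m → Fin 3 → ℝ)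
    (hiso0 : ∀ j : ZMod m, dot3 (q j - q0) (p j - p0) = 0)
    (hiso1 : ∀ j : ZMod m, dot3 (q (j+1) - q j) (p (j+1) - p j) = 0) :
    ∑ j : ZMod m, sphStarWeight m p0 p j * (dot3 (q j) (p j) - dot3 q0 p0)
      = -2 * sphStarVertexWeight m p0 p * dot3 q0 p0 := by
  have hp0u : dot3 p0 p0 = 1 := Real.sqrt_eq_one.1 hp0
  have hpu : ∀ j, dot3 (p j) (p j) = 1 := fun j => Real.sqrt_eq_one.1 (hp j)
  have hdet' : ∀ j, det3 p0 (p j) (p (j+1)) ≠ 0 := fun j => ne_of_gt (hdet j)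
  have hdetm : ∀ j : ZMod m, det3 p0 (p (j-1)) (p j) ≠ 0 := by
    intro j; have := hdet' (j - 1); rwa [sub_add_cancel] at this
  have hdetmpos : ∀ j : ZMod m, 0 < det3 p0 (p (j-1)) (p j) := by
    intro j; have := hdet (j - 1); rwa [sub_add_cancel] at this
  have hz2 : ∀ j, 0 < 1 - dot3 p0 (p j) ^ 2 := fun j =>
    one_sub_sq_pos p0 (p j) (p (j+1)) hp0u (hpu j) (hpu (j+1)) (hdet' j)
  have h1z : ∀ j, (0:ℝ) < 1 + dot3 p0 (p j) := fun j => by nlinarith [hz2 j]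
  have h1z' : ∀ j, (1:ℝ) + dot3 p0 (p j) ≠ 0 := fun j => ne_of_gt (h1z j)
  have hne1 : ∀ j, dot3 p0 (p j) ≠ 1 := by
    intro j h; have := hz2 j; rw [h] at this; norm_num at this
  have hmem1 : ∀ j, -1 ≤ dot3 p0 (p j) := fun j => by nlinarith [hz2 j]
  have hmem2 : ∀ j, dot3 p0 (p j) ≤ 1 := fun j => by nlinarith [hz2 j]
  have hcos2 : ∀ j, 2 * Real.cos (Real.arccos (dot3 p0 (p j)) / 2) ^ 2
      = 1 + dot3 p0 (p j) := by
    intro j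
    have h := Real.cos_sq (Real.arccos (dot3 p0 (p j)) / 2)
    rw [show 2 * (Real.arccos (dot3 p0 (p j)) / 2) = Real.arccos (dot3 p0 (p j)) by ring,
      Real.cos_arccos (hmem1 j) (hmem2 j)] at h
    rw [h]; ring
  have hsin2 : ∀ j, Real.sin (Real.arccos (dot3 p0 (p j)) / 2) ^ 2
      = (1 - dot3 p0 (p j)) / 2 := by
    intro j
    have h := Real.sin_sq_add_cos_sq (Real.arccos (dot3 p0 (p j)) / 2)
    have h2 := hcos2 j
    linarith
  -- closed form of the weights
  have hw : ∀ j, sphStarWeight m p0 p j =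
      ((1 + dot3 p0 (p j) - dot3 (p j) (p (j+1)) - dot3 p0 (p (j+1)))
          / det3 p0 (p j) (p (j+1))
        + (1 + dot3 p0 (p j) - dot3 (p j) (p (j-1)) - dot3 p0 (p (j-1)))
          / det3 p0 (p (j-1)) (p j))
        / (1 + dot3 p0 (p j)) := by
    intro j
    have hdetj1' : det3 p0 (p j) (p (j-1)) ≠ 0 := by
      rw [det3_swap23 p0 (p (j-1)) (p j)]; exact neg_ne_zero.2 (hdetm j)
    have t1 := tan_formula p0 (p j) (p (j+1)) hp0u (hpu j) (hpu (j+1)) (hdet' j)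
    have t2 := tan_formula p0 (p j) (p (j-1)) hp0u (hpu j) (hpu (j-1)) hdetj1'
    rw [sphAngle_comm p0 (p j) (p (j-1)), sphAngle_comm (p j) (p (j-1)) p0,
      sphAngle_comm (p (j-1)) p0 (p j)] at t2
    rw [det3_swap23 p0 (p (j-1)) (p j), abs_neg, abs_of_pos (hdetmpos j)] at t2
    rw [abs_of_pos (hdet j)] at t1
    simp only [sphStarWeight]
    rw [hcos2 j, t1, t2]
  -- rigid motions on the triangles
  choose W t hT0 hT1 hT2 using fun j =>
    triangle_rigid p0 (p j) (p (j+1)) q0 (q j) (q (j+1)) (hdet' j)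
      (hiso0 j) (hiso1 j) (hiso0 (j+1))
  have hf0 : ∀ j, dot3 q0 p0 = dot3 (t j) p0 := by
    intro j; rw [hT0 j, dot3_add_left, dot3_cross_self, zero_add]
  have hfj : ∀ j, dot3 (q j) (p j) = dot3 (t j) (p j) := by
    intro j; rw [hT1 j, dot3_add_left, dot3_cross_self, zero_add]
  have hfj1 : ∀ j, dot3 (q (j+1)) (p (j+1)) = dot3 (t j) (p (j+1)) := by
    intro j; rw [hT2 j, dot3_add_left, dot3_cross_self, zero_add]
  -- the central vanishing sum
  have key : ∑ j : ZMod m,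
      sphStarWeight m p0 p j * (dot3 (q j) (p j) - dot3 p0 (p j) * dot3 q0 p0) = 0 := by
    have split : ∀ j : ZMod m,
        sphStarWeight m p0 p j * (dot3 (q j) (p j) - dot3 p0 (p j) * dot3 q0 p0)
        = (1 + dot3 p0 (p j) - dot3 (p j) (p (j+1)) - dot3 p0 (p (j+1)))
            / det3 p0 (p j) (p (j+1)) / (1 + dot3 p0 (p j))
            * (dot3 (q j) (p j) - dot3 p0 (p j) * dot3 q0 p0)
          + (1 + dot3 p0 (p j) - dot3 (p j) (p (j-1)) - dot3 p0 (p (j-1)))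
            / det3 p0 (p (j-1)) (p j) / (1 + dot3 p0 (p j))
            * (dot3 (q j) (p j) - dot3 p0 (p j) * dot3 q0 p0) := by
      intro j; rw [hw j]; ring
    rw [Finset.sum_congr rfl fun j _ => split j, Finset.sum_add_distrib]
    have reidx : (∑ j : ZMod m,
        (1 + dot3 p0 (p j) - dot3 (p j) (p (j-1)) - dot3 p0 (p (j-1)))
          / det3 p0 (p (j-1)) (p j) / (1 + dot3 p0 (p j))
          * (dot3 (q j) (p j) - dot3 p0 (p j) * dot3 q0 p0))
        = ∑ j : ZMod m,
        (1 + dot3 p0 (p (j+1)) - dot3 (p (j+1)) (p j) - dot3 p0 (p j))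
          / det3 p0 (p j) (p (j+1)) / (1 + dot3 p0 (p (j+1)))
          * (dot3 (q (j+1)) (p (j+1)) - dot3 p0 (p (j+1)) * dot3 q0 p0) := by
      rw [← zsum_succ (fun j => (1 + dot3 p0 (p j) - dot3 (p j) (p (j-1)) - dot3 p0 (p (j-1)))
          / det3 p0 (p (j-1)) (p j) / (1 + dot3 p0 (p j))
          * (dot3 (q j) (p j) - dot3 p0 (p j) * dot3 q0 p0))]
      simp only [add_sub_cancel_right]
    rw [reidx, ← Finset.sum_add_distrib]
    have perj : ∀ j : ZMod m,
        (1 + dot3 p0 (p j) - dot3 (p j) (p (j+1)) - dot3 p0 (p (j+1)))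
            / det3 p0 (p j) (p (j+1)) / (1 + dot3 p0 (p j))
            * (dot3 (q j) (p j) - dot3 p0 (p j) * dot3 q0 p0)
          + (1 + dot3 p0 (p (j+1)) - dot3 (p (j+1)) (p j) - dot3 p0 (p j))
            / det3 p0 (p j) (p (j+1)) / (1 + dot3 p0 (p (j+1)))
            * (dot3 (q (j+1)) (p (j+1)) - dot3 p0 (p (j+1)) * dot3 q0 p0)
        = dot3 (t j) (cross3 p0 (p j)) / (1 + dot3 p0 (p j))
          - dot3 (t j) (cross3 p0 (p (j+1))) / (1 + dot3 p0 (p (j+1))) := by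
      intro j
      have ks := key_scalar p0 (p j) (p (j+1)) (t j) hp0u (hpu j) (hpu (j+1)) (hdet' j)
        (h1z' j) (h1z' (j+1))
      rw [← hf0 j, ← hfj j, ← hfj1 j] at ks
      rw [dot3_comm (p (j+1)) (p j)]
      exact ks
    rw [Finset.sum_congr rfl fun j _ => perj j]
    have sumsub : (∑ j : ZMod m, (dot3 (t j) (cross3 p0 (p j)) / (1 + dot3 p0 (p j))
          - dot3 (t j) (cross3 p0 (p (j+1))) / (1 + dot3 p0 (p (j+1)))))
        = ∑ j : ZMod m, (dot3 (t j) (cross3 p0 (p j)) / (1 + dot3 p0 (p j))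
          - dot3 (t (j-1)) (cross3 p0 (p j)) / (1 + dot3 p0 (p j))) := by
      rw [Finset.sum_sub_distrib, Finset.sum_sub_distrib]
      congr 1
      rw [← zsum_succ (fun j => dot3 (t (j-1)) (cross3 p0 (p j)) / (1 + dot3 p0 (p j)))]
      simp only [add_sub_cancel_right]
    rw [sumsub]
    have slidej : ∀ j : ZMod m,
        dot3 (t j) (cross3 p0 (p j)) / (1 + dot3 p0 (p j))
          - dot3 (t (j-1)) (cross3 p0 (p j)) / (1 + dot3 p0 (p j))
        = dot3 (W (j-1)) p0 - dot3 (W j) p0 := by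
      intro j
      have h1 : cross3 (W j) p0 + t j = cross3 (W (j-1)) p0 + t (j-1) :=
        (hT0 j).symm.trans (hT0 (j-1))
      have h2 : cross3 (W j) (p j) + t j = cross3 (W (j-1)) (p j) + t (j-1) := by
        have e1 := (hT1 j).symm
        have e2 := hT2 (j-1)
        rw [sub_add_cancel] at e2
        exact e1.trans e2
      have hs := slide p0 (p j) (W j) (W (j-1)) (t j) (t (j-1)) hp0u (hpu j) (hne1 j) h1 h2
      rw [div_sub_div_same, ← dot3_sub_left, hs]
      exact mul_div_cancel_left₀ _ (h1z' j)
    rw [Finset.sum_congr rfl fun j _ => slidej j, Finset.sum_sub_distrib]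
    rw [zsum_pred (fun j => dot3 (W j) p0)]
    exact sub_self _
  -- conclude
  have expand : ∀ j : ZMod m,
      sphStarWeight m p0 p j * (dot3 (q j) (p j) - dot3 q0 p0)
      = sphStarWeight m p0 p j * (dot3 (q j) (p j) - dot3 p0 (p j) * dot3 q0 p0)
        - sphStarWeight m p0 p j * ((1 - dot3 p0 (p j)) / 2) * (2 * dot3 q0 p0) := by
    intro j; ring
  rw [Finset.sum_congr rfl fun j _ => expand j, Finset.sum_sub_distrib, key, zero_sub]
  rw [sphStarVertexWeight]
  have hv : (∑ j : ZMod m, sphStarWeight m p0 p j * Real.sin (Real.arccos (dot3 p0 (p j)) / 2) ^ 2)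
      = ∑ j : ZMod m, sphStarWeight m p0 p j * ((1 - dot3 p0 (p j)) / 2) :=
    Finset.sum_congr rfl fun j _ => by rw [hsin2 j]
  rw [hv, ← Finset.sum_mul]
  ring
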